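/- Let δ ∈ S* ∪ {λ} and let p = p*_{η,δ,S} ∈ Q_δ. Then the set S_p of pruning levels of p (limit ordinals δ₁ ∈ (lg(η), δ) at which some node of T_{δ₁} has all proper initial segments in p but is not in p) is a subset of S; in particular S_p is tenuous. -/

import Mathlib

open Set Ordinal

namespace RRF

/-- `C` is a closed unbounded (club) subset of the ordinal `δ`. -/
def ClubIn (C : Set Ordinal) (δ : Ordinal) : Prop :=
  (∀ α < δ, ∃ β ∈ C, α < β ∧ β < δ) ∧
  (∀ α, 0 < α → α < δ → (∀ β < α, ∃ γ ∈ C, β < γ ∧ γ < α) → α ∈ C)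

/-- `S` is stationary in `δ`: it meets every club of `δ`. -/
def StatIn (S : Set Ordinal) (δ : Ordinal) : Prop :=
  ∀ C, ClubIn C δ → (S ∩ C).Nonempty

/-- `S` is tenuous (nowhere stationary): for every ordinal `δ` of
uncountable cofinality, `S ∩ δ` is not stationary in `δ`. -/
def Tenuous (S : Set Ordinal) : Prop :=
  ∀ δ : Ordinal, Cardinal.aleph0 < δ.cof → ¬ StatIn (S ∩ Iio δ) δ

end RRF

namespace RRF

/-- A node: a padded sequence of ordinals, given by its length together with a
function which is `0` from the length onwards. -/
abbrev Node : Type 1 := Ordinal × (Ordinal → Ordinal)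

namespace Node

/-- The length of a node. -/
def lg (η : Node) : Ordinal := η.1

/-- Restriction of a node to length `β`. -/
noncomputable def restrict (η : Node) (β : Ordinal) : Node :=
  (min β η.1, fun ε => if ε < min β η.1 then η.2 ε else 0)

/-- `η ⊴ ν` : `η` is an initial segment of `ν`. -/
def Below (η ν : Node) : Prop := η.1 ≤ ν.1 ∧ ∀ ε < η.1, η.2 ε = ν.2 ε

/-- The empty sequence. -/
def emptyNode : Node := (0, fun _ => 0)

/-- `η⌢⟨j⟩` : the immediate successor of `η` with last value `j`. -/
noncomputable def ext (η : Node) (j : Ordinal) : Node :=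
  (η.1 + 1, fun ε => if ε < η.1 then η.2 ε else if ε = η.1 then j else 0)

end Node

/-- `η` is a genuine (padded) sequence with `η(ε) < θ ε` for `ε < lg η`. -/
def IsSeq (θ : Ordinal → Cardinal) (η : Node) : Prop :=
  (∀ ε < η.1, η.2 ε < (θ ε).ord) ∧ ∀ ε, ¬ ε < η.1 → η.2 ε = 0

/-- `T_{<δ}` : the full tree of sequences of length `< δ`. -/
def Ttree (θ : Ordinal → Cardinal) (δ : Ordinal) : Set Node :=
  {η | η.1 < δ ∧ IsSeq θ η}

/-- `T_ε` : the `ε`-th level of the full tree. -/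
def Level (θ : Ordinal → Cardinal) (ε : Ordinal) : Set Node :=
  {η | η.1 = ε ∧ IsSeq θ η}

/-- `lim_δ(u)` : length-`δ` sequences all of whose proper restrictions lie in `u`. -/
def limNodes (θ : Ordinal → Cardinal) (δ : Ordinal) (u : Set Node) : Set Node :=
  {ν | ν.1 = δ ∧ IsSeq θ ν ∧ ∀ β < δ, ν.restrict β ∈ u}

end RRF

namespace RRF

/-- `p^{[η]}` : the nodes of `p` comparable with `η` which extend `η` or are
initial segments of it. -/
def restrTree (p : Set Node) (η : Node) : Set Node :=
  {ρ ∈ p | Node.Below η ρ ∨ Node.Below ρ η}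

/-- `η` is the trunk of `p` : it is comparable with every node of `p` and is
`⊴`-maximal with this property. -/
def IsTrunk (p : Set Node) (η : Node) : Prop :=
  η ∈ p ∧ (∀ ν ∈ p, Node.Below ν η ∨ Node.Below η ν) ∧
    ∀ η' ∈ p, (∀ ν ∈ p, Node.Below ν η' ∨ Node.Below η' ν) → Node.Below η' η

/-- `p` is a tree: nonempty and closed under restrictions. -/
def IsTree (p : Set Node) : Prop :=
  p.Nonempty ∧ ∀ η ∈ p, ∀ β ≤ η.1, η.restrict β ∈ p

/-- `S_p` : the set of pruning levels of `p` below `δ` — limit levels `δ₁ < δ`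
at which some node has all proper restrictions in `p` but is itself not in `p`. -/
def pruneSet (θ : Ordinal → Cardinal) (δ : Ordinal) (p : Set Node) : Set Ordinal :=
  {δ₁ | δ₁ < δ ∧ Order.IsSuccLimit δ₁ ∧ ∃ η ∈ Level θ δ₁, η ∉ p ∧ ∀ β < δ₁, η.restrict β ∈ p}

/-- `p` is a condition of the forcing `Q⁰_δ`. -/
structure IsCond0 (θ : Ordinal → Cardinal) (Sstar : Set Ordinal) (δ : Ordinal)
    (p : Set Node) : Prop where
  subset : p ⊆ Ttree θ δ
  tree : IsTree p
  trunk : ∃ η, IsTrunk p η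
  levels : ∀ η ∈ p, ∀ β, η.1 ≤ β → β < δ → ∃ ν ∈ p, ν.1 = β ∧ Node.Below η ν
  branches : ∀ η ∈ p, ∃ ν ∈ limNodes θ δ p, Node.Below η ν
  fullSucc : ∀ t, IsTrunk p t → ∀ η ∈ p, Node.Below t η →
      ∀ j < ((θ η.1).ord), η.ext j ∈ p
  pruneSub : pruneSet θ δ p ⊆ Sstar
  pruneTen : Tenuous (pruneSet θ δ p)
  pruneGt : ∀ t, IsTrunk p t → ∀ δ₁ ∈ pruneSet θ δ p, t.1 < δ₁

/-- Compatibility in `Q⁰_δ` (order is reverse inclusion). -/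
def Compat0 (θ : Ordinal → Cardinal) (Sstar : Set Ordinal) (δ : Ordinal)
    (p q : Set Node) : Prop :=
  ∃ r, IsCond0 θ Sstar δ r ∧ r ⊆ p ∧ r ⊆ q

/-- Membership in `Ξ_δ` for a family `⟨q_η : η ∈ Λ⟩`. -/
structure IsXi (θ : Ordinal → Cardinal) (Sstar : Set Ordinal) (δ : Ordinal)
    (Λ : Set Node) (q : Node → Set Node) : Prop where
  sub : Λ ⊆ Ttree θ δ
  cond : ∀ η ∈ Λ, IsCond0 θ Sstar δ (q η)
  trunk : ∀ η ∈ Λ, IsTrunk (q η) η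
  anti : ∀ η ∈ Λ, ∀ ν ∈ Λ, η ≠ ν → η ∉ q ν ∨ ν ∉ q η
  union : IsCond0 θ Sstar δ (⋃ η ∈ Λ, q η)

/-- The coder of `⟨q_η : η ∈ Λ⟩`. -/
def coder (Λ : Set Node) (q : Node → Set Node) : Set (Node × Node) :=
  {x | x.1 ∈ Λ ∧ x.2 ∈ q x.1}

end RRF

namespace RRF

-- The recursively defined condition `p*_{η,δ,S}`, relative to abstract
-- "successful level" data `succl`, `rst` (= `r*_δ`), `Λst` (= `Λ*_δ`) and
-- `qst` (= `⟨q*_{δ,η'}⟩`).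
open Classical in
noncomputable def pstar (θ : Ordinal → Cardinal) (succl : Ordinal → Prop)
    (rst : Ordinal → Set Node) (Λst : Ordinal → Set Node)
    (qst : Ordinal → Node → Set Node) :
    Ordinal → Node → Set Ordinal → Set Node :=
  WellFounded.fix (wellFounded_lt)
    (fun δ rec η S =>
      if sSup S ≤ η.1 then
        -- case (a): `(T_{<δ})^{[η]}`
        restrTree (Ttree θ δ) η
      else if _hmem : sSup S ∈ S then
        if hlt : sSup S < δ then
          if succl (sSup S) then
            -- case (d): last element `δ₁ = sSup S` is successful
            {ν ∈ Ttree θ δ |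
              (ν.1 < sSup S ∧ ν ∈ rec (sSup S) hlt η (S ∩ Set.Iio (sSup S))) ∨
              (sSup S ≤ ν.1 ∧
                ν.restrict (sSup S) ∈
                  limNodes θ (sSup S) (rec (sSup S) hlt η (S ∩ Set.Iio (sSup S))) ∧
                (ν.restrict (sSup S) ∈ limNodes θ (sSup S) (rst (sSup S)) →
                  ∃ η' ∈ Λst (sSup S),
                    ν.restrict (sSup S) ∈ limNodes θ (sSup S) (qst (sSup S) η')))}
          else
            -- case (c): last element `δ₁ = sSup S` is not successful
            {ν ∈ Ttree θ δ |
              (ν.1 < sSup S ∧ ν ∈ rec (sSup S) hlt η (S ∩ Set.Iio (sSup S))) ∨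
              (sSup S ≤ ν.1 ∧
                ν.restrict (sSup S) ∈
                  limNodes θ (sSup S) (rec (sSup S) hlt η (S ∩ Set.Iio (sSup S))))}
        else ∅
      else
        -- case (b): `S` unbounded above `lg η` with no last element
        {ν ∈ Ttree θ δ |
          Node.Below ν η ∨
          (Node.Below η ν ∧
            ((∃ δ₁, ∃ h : δ₁ < δ, δ₁ ∈ S ∧ ν.1 < δ₁ ∧
                ν ∈ rec δ₁ h η (S ∩ Set.Iio δ₁)) ∨
             (sSup S ≤ ν.1 ∧ ∀ δ₁, ∀ h : δ₁ < δ, δ₁ ∈ S → η.1 < δ₁ →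
                ∀ ζ < δ₁, ν.restrict ζ ∈ rec δ₁ h η (S ∩ Set.Iio δ₁))))})

/-- Membership in the main forcing `Q_δ`. -/
def IsCondQ (θ : Ordinal → Cardinal) (succl : Ordinal → Prop)
    (rst Λst : Ordinal → Set Node) (qst : Ordinal → Node → Set Node)
    (Sstar : Set Ordinal) (δ : Ordinal) (p : Set Node) : Prop :=
  ∃ η ∈ Ttree θ δ, ∃ S, S ⊆ Sstar ∩ Set.Iio δ ∧ Tenuous S ∧
    p = pstar θ succl rst Λst qst δ η S

/-- Membership in the forcing `Q'_δ`. -/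
def IsCondQ' (θ : Ordinal → Cardinal) (succl : Ordinal → Prop)
    (rst Λst : Ordinal → Set Node) (qst : Ordinal → Node → Set Node)
    (Sstar : Set Ordinal) (δ : Ordinal) (p : Set Node) : Prop :=
  IsCond0 θ Sstar δ p ∧
  ∀ δ₁ ∈ Sstar, δ₁ < δ → (∀ t, IsTrunk p t → t.1 < δ₁) →
    IsCondQ θ succl rst Λst qst Sstar δ₁ (p ∩ Ttree θ δ₁)

end RRF

namespace RRF

/-! ### Auxiliary lemmas for Statement 14 -/

namespace Node

lemma restrict_fst (η : Node) (β : Ordinal) : (η.restrict β).1 = min β η.1 := rfl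

lemma restrict_fst_of_le {η : Node} {β : Ordinal} (h : β ≤ η.1) :
    (η.restrict β).1 = β := min_eq_left h

lemma restrict_snd_of_lt {η : Node} {β ε : Ordinal} (h : ε < min β η.1) :
    (η.restrict β).2 ε = η.2 ε := if_pos h

lemma restrict_restrict (η : Node) {γ β : Ordinal} (h : γ ≤ β) :
    (η.restrict β).restrict γ = η.restrict γ := by
  have h1 : min γ (min β η.1) = min γ η.1 := by
    rw [← min_assoc, min_eq_left h]
  refine Prod.ext ?_ (funext fun ε => ?_)
  · exact h1
  · show (if ε < min γ (η.restrict β).1 then (η.restrict β).2 ε else 0)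
        = if ε < min γ η.1 then η.2 ε else 0
    rw [restrict_fst, h1]
    by_cases hε : ε < min γ η.1
    · rw [if_pos hε, if_pos hε]
      exact restrict_snd_of_lt (lt_min (lt_of_lt_of_le (lt_of_lt_of_le hε (min_le_left _ _)) h)
        (lt_of_lt_of_le hε (min_le_right _ _)))
    · rw [if_neg hε, if_neg hε]

lemma Below.trans {η ν ρ : Node} (h1 : η.Below ν) (h2 : ν.Below ρ) : η.Below ρ :=
  ⟨h1.1.trans h2.1, fun ε hε => (h1.2 ε hε).trans (h2.2 ε (lt_of_lt_of_le hε h1.1))⟩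

lemma restrict_below (η : Node) (β : Ordinal) : (η.restrict β).Below η :=
  ⟨min_le_right _ _, fun _ hε => if_pos hε⟩

lemma below_of_below_restrict {η ν : Node} {β : Ordinal}
    (h : η.Below (ν.restrict β)) : η.Below ν := h.trans (restrict_below ν β)

lemma restrict_below_of_below {η ν : Node} (h : η.Below ν) {β : Ordinal}
    (hβ : β ≤ η.1) : (ν.restrict β).Below η := by
  refine ⟨(min_le_left _ _).trans hβ, fun ε hε => ?_⟩
  have hε' : ε < min β ν.1 := hε
  rw [restrict_snd_of_lt hε']
  exact (h.2 ε (lt_of_lt_of_le (lt_of_lt_of_le hε' (min_le_left _ _)) hβ)).symm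

lemma below_of_restricts {η₁ η : Node} {δ₁ : Ordinal} (hlen : η₁.1 = δ₁)
    (hlim : Order.IsSuccLimit δ₁) (h : ∀ β < δ₁, (η₁.restrict β).Below η) : η₁.Below η := by
  have hlen' : δ₁ ≤ η.1 := by
    by_contra hle
    push_neg at hle
    have hβ : η.1 + 1 < δ₁ := by
      rw [Ordinal.add_one_eq_succ]; exact hlim.succ_lt hle
    have h2 := (h _ hβ).1
    rw [restrict_fst, hlen, min_eq_left hβ.le, Ordinal.add_one_eq_succ] at h2
    exact lt_irrefl _ (Order.succ_le_iff.mp h2)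
  refine ⟨hlen ▸ hlen', fun ε hε => ?_⟩
  have hεδ : ε < δ₁ := hlen ▸ hε
  have hβ : ε + 1 < δ₁ := by
    rw [Ordinal.add_one_eq_succ]; exact hlim.succ_lt hεδ
  have hmin : ε < min (ε + 1) η₁.1 :=
    lt_min (by rw [Ordinal.add_one_eq_succ]; exact Order.lt_succ ε) hε
  calc η₁.2 ε = (η₁.restrict (ε + 1)).2 ε := (restrict_snd_of_lt hmin).symm
    _ = η.2 ε := (h _ hβ).2 ε hmin

end Node

lemma isSeq_restrict {θ : Ordinal → Cardinal} {η : Node} (h : IsSeq θ η) (β : Ordinal) :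
    IsSeq θ (η.restrict β) := by
  constructor
  · intro ε hε
    rw [Node.restrict_snd_of_lt hε]
    exact h.1 ε (lt_of_lt_of_le hε (min_le_right _ _))
  · intro ε hε
    exact if_neg hε

lemma Ttree_mono {θ : Ordinal → Cardinal} {δ δ' : Ordinal} (h : δ ≤ δ') :
    Ttree θ δ ⊆ Ttree θ δ' := fun _ hν => ⟨lt_of_lt_of_le hν.1 h, hν.2⟩

lemma restrict_mem_Ttree {θ : Ordinal → Cardinal} {δ : Ordinal} {ν : Node}
    (hν : ν ∈ Ttree θ δ) (β : Ordinal) : ν.restrict β ∈ Ttree θ δ :=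
  ⟨lt_of_le_of_lt (min_le_right _ _) hν.1, isSeq_restrict hν.2 β⟩

lemma bddAbove_of_subset_Iio {S : Set Ordinal} {δ : Ordinal} (h : S ⊆ Set.Iio δ) :
    BddAbove S := ⟨δ, fun _ hx => (h hx).le⟩

lemma le_sSup_of_mem {S : Set Ordinal} {δ : Ordinal} (hS : S ⊆ Set.Iio δ) {x : Ordinal}
    (hx : x ∈ S) : x ≤ sSup S := le_csSup (bddAbove_of_subset_Iio hS) hx

lemma exists_mem_gt_of_lt_sSup {S : Set Ordinal} {x : Ordinal} (h : x < sSup S) :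
    ∃ y ∈ S, x < y := by
  by_contra hc
  push_neg at hc
  exact absurd (csSup_le' hc) (not_le.mpr h)

lemma tenuous_mono {S' S : Set Ordinal} (h : S' ⊆ S) (ht : Tenuous S) : Tenuous S' := by
  intro δ hδ hst
  refine ht δ hδ (fun C hC => ?_)
  obtain ⟨x, hx1, hx2⟩ := hst C hC
  exact ⟨x, ⟨h hx1.1, hx1.2⟩, hx2⟩

section PstarLemmas

variable (θ : Ordinal → Cardinal) (succl : Ordinal → Prop)
  (rst Λst : Ordinal → Set Node) (qst : Ordinal → Node → Set Node)

lemma pstar_case_a {δ : Ordinal} {η : Node} {S : Set Ordinal} (h : sSup S ≤ η.1) :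
    pstar θ succl rst Λst qst δ η S = restrTree (Ttree θ δ) η := by
  rw [pstar, WellFounded.fix_eq]
  simp only [if_pos h]

lemma pstar_case_empty {δ : Ordinal} {η : Node} {S : Set Ordinal}
    (h1 : ¬ sSup S ≤ η.1) (h2 : sSup S ∈ S) (h3 : ¬ sSup S < δ) :
    pstar θ succl rst Λst qst δ η S = ∅ := by
  rw [pstar, WellFounded.fix_eq]
  simp only [if_neg h1, dif_pos h2, dif_neg h3]

lemma pstar_case_c {δ : Ordinal} {η : Node} {S : Set Ordinal}
    (h1 : ¬ sSup S ≤ η.1) (h2 : sSup S ∈ S) (h3 : sSup S < δ) (h4 : ¬ succl (sSup S)) :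
    pstar θ succl rst Λst qst δ η S =
      {ν ∈ Ttree θ δ |
        (ν.1 < sSup S ∧ ν ∈ pstar θ succl rst Λst qst (sSup S) η (S ∩ Set.Iio (sSup S))) ∨
        (sSup S ≤ ν.1 ∧
          ν.restrict (sSup S) ∈
            limNodes θ (sSup S) (pstar θ succl rst Λst qst (sSup S) η (S ∩ Set.Iio (sSup S))))} := by
  rw [pstar, WellFounded.fix_eq]
  simp only [if_neg h1, dif_pos h2, dif_pos h3, if_neg h4]

lemma pstar_case_d {δ : Ordinal} {η : Node} {S : Set Ordinal}
    (h1 : ¬ sSup S ≤ η.1) (h2 : sSup S ∈ S) (h3 : sSup S < δ) (h4 : succl (sSup S)) :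
    pstar θ succl rst Λst qst δ η S =
      {ν ∈ Ttree θ δ |
        (ν.1 < sSup S ∧ ν ∈ pstar θ succl rst Λst qst (sSup S) η (S ∩ Set.Iio (sSup S))) ∨
        (sSup S ≤ ν.1 ∧
          ν.restrict (sSup S) ∈
            limNodes θ (sSup S) (pstar θ succl rst Λst qst (sSup S) η (S ∩ Set.Iio (sSup S))) ∧
          (ν.restrict (sSup S) ∈ limNodes θ (sSup S) (rst (sSup S)) →
            ∃ η' ∈ Λst (sSup S),
              ν.restrict (sSup S) ∈ limNodes θ (sSup S) (qst (sSup S) η')))} := by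
  rw [pstar, WellFounded.fix_eq]
  simp only [if_neg h1, dif_pos h2, dif_pos h3, if_pos h4]

lemma pstar_case_b {δ : Ordinal} {η : Node} {S : Set Ordinal}
    (h1 : ¬ sSup S ≤ η.1) (h2 : sSup S ∉ S) :
    pstar θ succl rst Λst qst δ η S =
      {ν ∈ Ttree θ δ |
        Node.Below ν η ∨
        (Node.Below η ν ∧
          ((∃ δ₁, ∃ _ : δ₁ < δ, δ₁ ∈ S ∧ ν.1 < δ₁ ∧
              ν ∈ pstar θ succl rst Λst qst δ₁ η (S ∩ Set.Iio δ₁)) ∨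
           (sSup S ≤ ν.1 ∧ ∀ δ₁, ∀ _ : δ₁ < δ, δ₁ ∈ S → η.1 < δ₁ →
              ∀ ζ < δ₁, ν.restrict ζ ∈ pstar θ succl rst Λst qst δ₁ η (S ∩ Set.Iio δ₁))))} := by
  rw [pstar, WellFounded.fix_eq]
  simp only [if_neg h1, dif_neg h2]

lemma mem_restrTree {p : Set Node} {η ρ : Node} :
    ρ ∈ restrTree p η ↔ ρ ∈ p ∧ (Node.Below η ρ ∨ Node.Below ρ η) := Iff.rfl

lemma pstar_subset (δ : Ordinal) (η : Node) (S : Set Ordinal) :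
    pstar θ succl rst Λst qst δ η S ⊆ Ttree θ δ := by
  intro ν hν
  by_cases h1 : sSup S ≤ η.1
  · rw [pstar_case_a θ succl rst Λst qst h1] at hν
    exact hν.1
  by_cases h2 : sSup S ∈ S
  · by_cases h3 : sSup S < δ
    · by_cases h4 : succl (sSup S)
      · rw [pstar_case_d θ succl rst Λst qst h1 h2 h3 h4] at hν; exact hν.1
      · rw [pstar_case_c θ succl rst Λst qst h1 h2 h3 h4] at hν; exact hν.1
    · rw [pstar_case_empty θ succl rst Λst qst h1 h2 h3] at hν
      exact absurd hν (Set.notMem_empty ν)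
  · rw [pstar_case_b θ succl rst Λst qst h1 h2] at hν; exact hν.1

lemma mem_pstar_of_below (δ : Ordinal) : ∀ (η : Node) (S : Set Ordinal), S ⊆ Set.Iio δ →
    ∀ ν ∈ Ttree θ δ, ν.Below η → ν ∈ pstar θ succl rst Λst qst δ η S := by
  induction δ using Ordinal.induction with
  | h δ IH =>
    intro η S hS ν hν hb
    by_cases h1 : sSup S ≤ η.1
    · rw [pstar_case_a θ succl rst Λst qst h1]
      exact ⟨hν, Or.inr hb⟩
    by_cases h2 : sSup S ∈ S
    · have h3 : sSup S < δ := hS h2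
      have hησ : η.1 < sSup S := not_le.mp h1
      have hν1 : ν.1 < sSup S := lt_of_le_of_lt hb.1 hησ
      have hrec : ν ∈ pstar θ succl rst Λst qst (sSup S) η (S ∩ Set.Iio (sSup S)) :=
        IH (sSup S) h3 η _ Set.inter_subset_right ν ⟨hν1, hν.2⟩ hb
      by_cases h4 : succl (sSup S)
      · rw [pstar_case_d θ succl rst Λst qst h1 h2 h3 h4]
        exact ⟨hν, Or.inl ⟨hν1, hrec⟩⟩
      · rw [pstar_case_c θ succl rst Λst qst h1 h2 h3 h4]
        exact ⟨hν, Or.inl ⟨hν1, hrec⟩⟩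
    · rw [pstar_case_b θ succl rst Λst qst h1 h2]
      exact ⟨hν, Or.inl hb⟩

lemma pstar_comparable (δ : Ordinal) : ∀ (η : Node) (S : Set Ordinal), S ⊆ Set.Iio δ →
    ∀ ν ∈ pstar θ succl rst Λst qst δ η S, ν.Below η ∨ η.Below ν := by
  induction δ using Ordinal.induction with
  | h δ IH =>
    intro η S hS ν hν
    by_cases h1 : sSup S ≤ η.1
    · rw [pstar_case_a θ succl rst Λst qst h1] at hν
      exact hν.2.symm
    by_cases h2 : sSup S ∈ S
    · have h3 : sSup S < δ := hS h2
      have hησ : η.1 < sSup S := not_le.mp h1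
      have key : ∀ ρ, ρ ∈ pstar θ succl rst Λst qst (sSup S) η (S ∩ Set.Iio (sSup S)) →
          ρ.Below η ∨ η.Below ρ := fun ρ hρ =>
        IH (sSup S) h3 η _ Set.inter_subset_right ρ hρ
      have main : sSup S ≤ ν.1 →
          ν.restrict (sSup S) ∈ limNodes θ (sSup S)
            (pstar θ succl rst Λst qst (sSup S) η (S ∩ Set.Iio (sSup S))) →
          ν.Below η ∨ η.Below ν := by
        intro hle hlimm
        have hm := hlimm.2.2 η.1 hησ
        rw [Node.restrict_restrict ν hησ.le] at hm
        have hcmp := key _ hm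
        have hη1ν : η.1 ≤ ν.1 := le_of_lt (lt_of_lt_of_le hησ hle)
        refine Or.inr ⟨hη1ν, fun ε hε => ?_⟩
        have hmin : ε < min η.1 ν.1 := lt_min hε (lt_of_lt_of_le hε hη1ν)
        rcases hcmp with h | h
        · exact (h.2 ε hmin).symm.trans (Node.restrict_snd_of_lt hmin)
        · exact (h.2 ε hε).trans (Node.restrict_snd_of_lt hmin)
      by_cases h4 : succl (sSup S)
      · rw [pstar_case_d θ succl rst Λst qst h1 h2 h3 h4] at hν
        rcases hν.2 with ⟨_, hm⟩ | ⟨hle, hlimm, _⟩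
        · exact key ν hm
        · exact main hle hlimm
      · rw [pstar_case_c θ succl rst Λst qst h1 h2 h3 h4] at hν
        rcases hν.2 with ⟨_, hm⟩ | ⟨hle, hlimm⟩
        · exact key ν hm
        · exact main hle hlimm
    · rw [pstar_case_b θ succl rst Λst qst h1 h2] at hν
      rcases hν.2 with h | ⟨h, _⟩
      · exact Or.inl h
      · exact Or.inr h

lemma pstar_short_iff {δ : Ordinal} {η : Node} {S : Set Ordinal}
    (h1 : ¬ sSup S ≤ η.1) (h2 : sSup S ∈ S) (h3 : sSup S < δ) {ν : Node}
    (hν : ν.1 < sSup S) :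
    ν ∈ pstar θ succl rst Λst qst δ η S ↔
      ν ∈ Ttree θ δ ∧ ν ∈ pstar θ succl rst Λst qst (sSup S) η (S ∩ Set.Iio (sSup S)) := by
  by_cases h4 : succl (sSup S)
  · rw [pstar_case_d θ succl rst Λst qst h1 h2 h3 h4]
    constructor
    · rintro ⟨hT, ⟨_, hm⟩ | ⟨hle, _⟩⟩
      · exact ⟨hT, hm⟩
      · exact absurd hν (not_lt.mpr hle)
    · rintro ⟨hT, hm⟩
      exact ⟨hT, Or.inl ⟨hν, hm⟩⟩
  · rw [pstar_case_c θ succl rst Λst qst h1 h2 h3 h4]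
    constructor
    · rintro ⟨hT, ⟨_, hm⟩ | ⟨hle, _⟩⟩
      · exact ⟨hT, hm⟩
      · exact absurd hν (not_lt.mpr hle)
    · rintro ⟨hT, hm⟩
      exact ⟨hT, Or.inl ⟨hν, hm⟩⟩

lemma pstar_coh (δ : Ordinal) : ∀ (η : Node) (S : Set Ordinal), S ⊆ Set.Iio δ →
    ∀ δ₂ ∈ S, ∀ ν : Node, ν.1 < δ₂ →
      (ν ∈ pstar θ succl rst Λst qst δ η S ↔
        ν ∈ pstar θ succl rst Λst qst δ₂ η (S ∩ Set.Iio δ₂)) := by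
  induction δ using Ordinal.induction with
  | h δ IH =>
    intro η S hS δ₂ hδ₂S ν hνδ₂
    have hδ₂δ : δ₂ < δ := hS hδ₂S
    have hδ₂σ : δ₂ ≤ sSup S := le_sSup_of_mem hS hδ₂S
    by_cases h1 : sSup S ≤ η.1
    · have h1' : sSup (S ∩ Set.Iio δ₂) ≤ η.1 :=
        le_trans (csSup_le' fun x hx => le_sSup_of_mem hS hx.1) h1
      rw [pstar_case_a θ succl rst Λst qst h1, pstar_case_a θ succl rst Λst qst h1']
      constructor
      · rintro ⟨hT, hc⟩; exact ⟨⟨hνδ₂, hT.2⟩, hc⟩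
      · rintro ⟨hT, hc⟩; exact ⟨⟨lt_trans hT.1 hδ₂δ, hT.2⟩, hc⟩
    by_cases h2 : sSup S ∈ S
    · have h3 : sSup S < δ := hS h2
      rcases eq_or_lt_of_le hδ₂σ with heq | hlt2
      · have hν1 : ν.1 < sSup S := heq ▸ hνδ₂
        rw [pstar_short_iff θ succl rst Λst qst h1 h2 h3 hν1, ← heq]
        constructor
        · exact fun h => h.2
        · intro h
          exact ⟨Ttree_mono hδ₂δ.le (pstar_subset θ succl rst Λst qst δ₂ η _ h), h⟩
      · have hν1 : ν.1 < sSup S := lt_trans hνδ₂ hlt2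
        rw [pstar_short_iff θ succl rst Λst qst h1 h2 h3 hν1]
        have hIH := IH (sSup S) h3 η (S ∩ Set.Iio (sSup S)) Set.inter_subset_right δ₂
          ⟨hδ₂S, hlt2⟩ ν hνδ₂
        have hset : S ∩ Set.Iio (sSup S) ∩ Set.Iio δ₂ = S ∩ Set.Iio δ₂ := by
          rw [Set.inter_assoc, Set.Iio_inter_Iio, min_eq_right hlt2.le]
        rw [hset] at hIH
        rw [← hIH]
        constructor
        · exact fun h => h.2
        · intro h
          exact ⟨Ttree_mono h3.le (pstar_subset θ succl rst Λst qst (sSup S) η _ h), h⟩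
    · have hσδ₂ : δ₂ < sSup S := lt_of_le_of_ne hδ₂σ (fun h => h2 (h ▸ hδ₂S))
      rw [pstar_case_b θ succl rst Λst qst h1 h2]
      constructor
      · rintro ⟨hT, hc | ⟨hb, hA | hB⟩⟩
        · exact mem_pstar_of_below θ succl rst Λst qst δ₂ η _ Set.inter_subset_right ν
            ⟨hνδ₂, hT.2⟩ hc
        · obtain ⟨δ₃, hδ₃δ, hδ₃S, hνδ₃, hm⟩ := hA
          rcases lt_trichotomy δ₃ δ₂ with hc3 | hc3 | hc3
          · have hIH := IH δ₂ hδ₂δ η (S ∩ Set.Iio δ₂) Set.inter_subset_right δ₃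
              ⟨hδ₃S, hc3⟩ ν hνδ₃
            have hset : S ∩ Set.Iio δ₂ ∩ Set.Iio δ₃ = S ∩ Set.Iio δ₃ := by
              rw [Set.inter_assoc, Set.Iio_inter_Iio, min_eq_right hc3.le]
            rw [hset] at hIH
            exact hIH.mpr hm
          · exact hc3 ▸ hm
          · have hIH := IH δ₃ hδ₃δ η (S ∩ Set.Iio δ₃) Set.inter_subset_right δ₂
              ⟨hδ₂S, hc3⟩ ν hνδ₂
            have hset : S ∩ Set.Iio δ₃ ∩ Set.Iio δ₂ = S ∩ Set.Iio δ₂ := by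
              rw [Set.inter_assoc, Set.Iio_inter_Iio, min_eq_right hc3.le]
            rw [hset] at hIH
            exact hIH.mp hm
        · exact absurd hB.1 (not_le.mpr (lt_trans hνδ₂ hσδ₂))
      · intro hm
        have hT : ν ∈ Ttree θ δ :=
          Ttree_mono hδ₂δ.le (pstar_subset θ succl rst Λst qst δ₂ η _ hm)
        rcases pstar_comparable θ succl rst Λst qst δ₂ η _ Set.inter_subset_right ν hm with h | h
        · exact ⟨hT, Or.inl h⟩
        · exact ⟨hT, Or.inr ⟨h, Or.inl ⟨δ₂, hδ₂δ, hδ₂S, hνδ₂, hm⟩⟩⟩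

lemma pstar_limit_mem (δ : Ordinal) : ∀ (η : Node) (S : Set Ordinal), S ⊆ Set.Iio δ →
    ∀ δ₁, δ₁ < δ → Order.IsSuccLimit δ₁ → δ₁ ∉ S → ∀ η₁ ∈ Level θ δ₁,
      (∀ β < δ₁, η₁.restrict β ∈ pstar θ succl rst Λst qst δ η S) →
      η₁ ∈ pstar θ succl rst Λst qst δ η S := by
  induction δ using Ordinal.induction with
  | h δ IH =>
    intro η S hS δ₁ hδ₁δ hlim hδ₁S η₁ hLev hres
    obtain ⟨hη₁1, hη₁seq⟩ := hLev
    have hT : η₁ ∈ Ttree θ δ := ⟨hη₁1 ▸ hδ₁δ, hη₁seq⟩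
    have hrfst : ∀ β < δ₁, (η₁.restrict β).1 = β := fun β hβ =>
      Node.restrict_fst_of_le (le_of_le_of_eq hβ.le hη₁1.symm)
    by_cases h1 : sSup S ≤ η.1
    · rw [pstar_case_a θ succl rst Λst qst h1] at hres ⊢
      by_cases hcmp : η.1 < δ₁
      · have hβ : η.1 + 1 < δ₁ := by
          rw [Ordinal.add_one_eq_succ]; exact hlim.succ_lt hcmp
        rcases (hres _ hβ).2 with h | h
        · exact ⟨hT, Or.inl (Node.below_of_below_restrict h)⟩
        · exfalso
          have h' := h.1
          rw [hrfst _ hβ, Ordinal.add_one_eq_succ] at h'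
          exact lt_irrefl _ (Order.succ_le_iff.mp h')
      · push_neg at hcmp
        refine ⟨hT, Or.inr (Node.below_of_restricts hη₁1 hlim fun β hβ => ?_)⟩
        rcases (hres β hβ).2 with h | h
        · exfalso
          have h' := h.1
          rw [hrfst _ hβ] at h'
          exact absurd (lt_of_le_of_lt h' hβ) (not_lt.mpr hcmp)
        · exact h
    by_cases h2 : sSup S ∈ S
    · have h3 : sSup S < δ := hS h2
      have hησ : η.1 < sSup S := not_le.mp h1
      have hδ₁σ : δ₁ ≠ sSup S := fun h => hδ₁S (h ▸ h2)
      rcases lt_or_gt_of_ne hδ₁σ with hlt | hgt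
      · have hrec : ∀ β < δ₁, η₁.restrict β ∈
            pstar θ succl rst Λst qst (sSup S) η (S ∩ Set.Iio (sSup S)) := by
          intro β hβ
          have hν1 : (η₁.restrict β).1 < sSup S := by
            rw [hrfst _ hβ]; exact lt_trans hβ hlt
          exact ((pstar_short_iff θ succl rst Λst qst h1 h2 h3 hν1).mp (hres β hβ)).2
        have hmem := IH (sSup S) h3 η _ Set.inter_subset_right δ₁ hlt hlim
          (fun h => hδ₁S h.1) η₁ ⟨hη₁1, hη₁seq⟩ hrec
        have hν1 : η₁.1 < sSup S := hη₁1 ▸ hlt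
        exact (pstar_short_iff θ succl rst Λst qst h1 h2 h3 hν1).mpr ⟨hT, hmem⟩
      · have hσν : sSup S ≤ η₁.1 := hη₁1 ▸ hgt.le
        have hβ₀ : sSup S + 1 < δ₁ := by
          rw [Ordinal.add_one_eq_succ]; exact hlim.succ_lt hgt
        have hresβ₀ := hres _ hβ₀
        have hσsucc : sSup S ≤ sSup S + 1 := by
          rw [Ordinal.add_one_eq_succ]; exact (Order.lt_succ _).le
        have hrr : (η₁.restrict (sSup S + 1)).restrict (sSup S) = η₁.restrict (sSup S) :=
          Node.restrict_restrict η₁ hσsucc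
        have hnotlt : ¬ (η₁.restrict (sSup S + 1)).1 < sSup S := by
          rw [hrfst _ hβ₀]
          exact not_lt.mpr hσsucc
        by_cases h4 : succl (sSup S)
        · rw [pstar_case_d θ succl rst Λst qst h1 h2 h3 h4] at hresβ₀ ⊢
          rcases hresβ₀.2 with ⟨hl, _⟩ | ⟨_, hlimm, himp⟩
          · exact absurd hl hnotlt
          · rw [hrr] at hlimm himp
            exact ⟨hT, Or.inr ⟨hσν, hlimm, himp⟩⟩
        · rw [pstar_case_c θ succl rst Λst qst h1 h2 h3 h4] at hresβ₀ ⊢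
          rcases hresβ₀.2 with ⟨hl, _⟩ | ⟨_, hlimm⟩
          · exact absurd hl hnotlt
          · rw [hrr] at hlimm
            exact ⟨hT, Or.inr ⟨hσν, hlimm⟩⟩
    · have hησ : η.1 < sSup S := not_le.mp h1
      rw [pstar_case_b θ succl rst Λst qst h1 h2] at hres ⊢
      by_cases hcmp : η.1 < δ₁
      case neg =>
        push_neg at hcmp
        refine ⟨hT, Or.inl (Node.below_of_restricts hη₁1 hlim fun β hβ => ?_)⟩
        rcases (hres β hβ).2 with h | ⟨h, _⟩
        · exact h
        · exfalso
          have h' := h.1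
          rw [hrfst _ hβ] at h'
          exact absurd (lt_of_le_of_lt h' hβ) (not_lt.mpr hcmp)
      case pos =>
      have hβη : η.1 + 1 < δ₁ := by
        rw [Ordinal.add_one_eq_succ]; exact hlim.succ_lt hcmp
      have hbelow : Node.Below η η₁ := by
        rcases (hres _ hβη).2 with h | ⟨h, _⟩
        · exfalso
          have h' := h.1
          rw [hrfst _ hβη, Ordinal.add_one_eq_succ] at h'
          exact lt_irrefl _ (Order.succ_le_iff.mp h')
        · exact Node.below_of_below_restrict h
      have hAB : ∀ β, η.1 < β → β < δ₁ →
          (∃ δ₂, ∃ _ : δ₂ < δ, δ₂ ∈ S ∧ (η₁.restrict β).1 < δ₂ ∧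
            η₁.restrict β ∈ pstar θ succl rst Λst qst δ₂ η (S ∩ Set.Iio δ₂)) ∨
          (sSup S ≤ (η₁.restrict β).1 ∧ ∀ δ₂, ∀ _ : δ₂ < δ, δ₂ ∈ S → η.1 < δ₂ →
            ∀ ζ < δ₂, (η₁.restrict β).restrict ζ ∈
              pstar θ succl rst Λst qst δ₂ η (S ∩ Set.Iio δ₂)) := by
        intro β hηβ hβ
        rcases (hres β hβ).2 with h | ⟨_, hA⟩
        · exfalso
          have h' := h.1
          rw [hrfst _ hβ] at h'
          exact absurd hηβ (not_lt.mpr h')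
        · exact hA
      have claim : ∀ δ₂ ∈ S, ∀ β, β < δ₁ → β < δ₂ →
          η₁.restrict β ∈ pstar θ succl rst Λst qst δ₂ η (S ∩ Set.Iio δ₂) := by
        intro δ₂ hδ₂S β hβδ₁ hβδ₂
        have hTβ : η₁.restrict β ∈ Ttree θ δ₂ := by
          refine ⟨?_, isSeq_restrict hη₁seq β⟩
          rw [hrfst _ hβδ₁]; exact hβδ₂
        by_cases hβη : β ≤ η.1
        · exact mem_pstar_of_below θ succl rst Λst qst δ₂ η _ Set.inter_subset_right _ hTβ
            (Node.restrict_below_of_below hbelow hβη)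
        · push_neg at hβη
          rcases hAB β hβη hβδ₁ with ⟨δ₃, hδ₃δ, hδ₃S, hνδ₃, hm⟩ | ⟨hσβ, _⟩
          · rcases lt_trichotomy δ₃ δ₂ with hc3 | hc3 | hc3
            · have hIH := pstar_coh θ succl rst Λst qst δ₂ η (S ∩ Set.Iio δ₂)
                Set.inter_subset_right δ₃ ⟨hδ₃S, hc3⟩ (η₁.restrict β) hνδ₃
              have hset : S ∩ Set.Iio δ₂ ∩ Set.Iio δ₃ = S ∩ Set.Iio δ₃ := by
                rw [Set.inter_assoc, Set.Iio_inter_Iio, min_eq_right hc3.le]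
              rw [hset] at hIH
              exact hIH.mpr hm
            · exact hc3 ▸ hm
            · have hIH := pstar_coh θ succl rst Λst qst δ₃ η (S ∩ Set.Iio δ₃)
                Set.inter_subset_right δ₂ ⟨hδ₂S, hc3⟩ (η₁.restrict β)
                (by rw [hrfst _ hβδ₁]; exact hβδ₂)
              have hset : S ∩ Set.Iio δ₃ ∩ Set.Iio δ₂ = S ∩ Set.Iio δ₂ := by
                rw [Set.inter_assoc, Set.Iio_inter_Iio, min_eq_right hc3.le]
              rw [hset] at hIH
              exact hIH.mp hm
          · exfalso
            rw [hrfst _ hβδ₁] at hσβ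
            exact absurd hσβ
              (not_le.mpr (lt_of_lt_of_le hβδ₂ (le_sSup_of_mem hS hδ₂S)))
      by_cases hB : ∃ β₀, η.1 < β₀ ∧ β₀ < δ₁ ∧ sSup S ≤ β₀ ∧
          ∀ δ₂, ∀ _ : δ₂ < δ, δ₂ ∈ S → η.1 < δ₂ →
            ∀ ζ < δ₂, (η₁.restrict β₀).restrict ζ ∈
              pstar θ succl rst Λst qst δ₂ η (S ∩ Set.Iio δ₂)
      · obtain ⟨β₀, hηβ₀, hβ₀δ₁, hσβ₀, hall⟩ := hB
        refine ⟨hT, Or.inr ⟨hbelow, Or.inr ⟨?_, ?_⟩⟩⟩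
        · rw [hη₁1]; exact hσβ₀.trans hβ₀δ₁.le
        · intro δ₂ hδ₂δ hδ₂S hηδ₂ ζ hζ
          have h := hall δ₂ hδ₂δ hδ₂S hηδ₂ ζ hζ
          rwa [Node.restrict_restrict η₁
            (le_trans hζ.le (le_trans (le_sSup_of_mem hS hδ₂S) hσβ₀))] at h
      · have hA : ∀ β, η.1 < β → β < δ₁ →
            ∃ δ₂, δ₂ < δ ∧ δ₂ ∈ S ∧ β < δ₂ ∧
              η₁.restrict β ∈ pstar θ succl rst Λst qst δ₂ η (S ∩ Set.Iio δ₂) := by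
          intro β hηβ hβ
          rcases hAB β hηβ hβ with ⟨δ₂, hh, h5, h6, h7⟩ | ⟨hσβ, hall⟩
          · rw [hrfst _ hβ] at h6
            exact ⟨δ₂, hh, h5, h6, h7⟩
          · exfalso
            rw [hrfst _ hβ] at hσβ
            exact hB ⟨β, hηβ, hβ, hσβ, hall⟩
        rcases lt_trichotomy δ₁ (sSup S) with hc | hc | hc
        · obtain ⟨δ₂, hδ₂S, hδ₁δ₂⟩ := exists_mem_gt_of_lt_sSup hc
          have hδ₂δ : δ₂ < δ := hS hδ₂S
          have hmem := IH δ₂ hδ₂δ η (S ∩ Set.Iio δ₂) Set.inter_subset_right δ₁ hδ₁δ₂ hlim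
            (fun h => hδ₁S h.1) η₁ ⟨hη₁1, hη₁seq⟩
            (fun β hβ => claim δ₂ hδ₂S β hβ (lt_trans hβ hδ₁δ₂))
          have hν1 : η₁.1 < δ₂ := hη₁1 ▸ hδ₁δ₂
          exact ⟨hT, Or.inr ⟨hbelow, Or.inl ⟨δ₂, hδ₂δ, hδ₂S, hν1, hmem⟩⟩⟩
        · refine ⟨hT, Or.inr ⟨hbelow, Or.inr ⟨by rw [hη₁1, hc], ?_⟩⟩⟩
          intro δ₂ hδ₂δ hδ₂S hηδ₂ ζ hζ
          have hδ₂δ₁ : δ₂ < δ₁ := by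
            have hle : δ₂ ≤ δ₁ := by rw [hc]; exact le_sSup_of_mem hS hδ₂S
            exact lt_of_le_of_ne hle (fun h => hδ₁S (h ▸ hδ₂S))
          exact claim δ₂ hδ₂S ζ (lt_trans hζ hδ₂δ₁) hζ
        · exfalso
          obtain ⟨δ₃, _, hδ₃S, hσδ₃, _⟩ := hA (sSup S) hησ hc
          exact absurd hσδ₃ (not_lt.mpr (le_sSup_of_mem hS hδ₃S))

end PstarLemmas

end RRF

namespace RRF

/-- for `p = p*_{η,δ,S} ∈ Q_δ`, the set of pruning levels
`S_p` is contained in `S`; in particular it is tenuous. -/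
theorem stmt14 (lamc : Cardinal) (hinacc : lamc.IsInaccessible)
    (θ : Ordinal → Cardinal) (hθ : ∀ ε, 2 ≤ θ ε)
    (hθlt : ∀ ε < lamc.ord, (θ ε).ord < lamc.ord)
    (Sstar : Set Ordinal) (hSsub : Sstar ⊆ Set.Iio lamc.ord)
    (hSstat : StatIn Sstar lamc.ord)
    (hSsl : ∀ δ ∈ Sstar, (Ordinal.card δ).IsStrongLimit ∧ (Ordinal.card δ).ord = δ)
    (hSθ : ∀ δ ∈ Sstar, ∀ ζ < δ, (θ ζ).ord < δ)
    (hrefl : ∀ ε < lamc.ord, StatIn (Sstar ∩ Set.Iio ε) ε →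
      (Ordinal.card ε).IsInaccessible)
    (succl : Ordinal → Prop) (rst Λst : Ordinal → Set Node)
    (qst : Ordinal → Node → Set Node)
    (hsucc : ∀ δ₁, succl δ₁ → IsXi θ Sstar δ₁ (Λst δ₁) (qst δ₁) ∧
      rst δ₁ = ⋃ η ∈ Λst δ₁, qst δ₁ η)
    (δ : Ordinal) (hδ : δ ∈ Sstar ∨ δ = lamc.ord)
    (η : Node) (hη : η ∈ Ttree θ δ)
    (S : Set Ordinal) (hS : S ⊆ Sstar ∩ Set.Iio δ) (hten : Tenuous S) :
    pruneSet θ δ (pstar θ succl rst Λst qst δ η S) ⊆ S ∧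
      Tenuous (pruneSet θ δ (pstar θ succl rst Λst qst δ η S)) := by
  have hS' : S ⊆ Set.Iio δ := fun x hx => (hS hx).2
  have hsub : pruneSet θ δ (pstar θ succl rst Λst qst δ η S) ⊆ S := by
    intro δ₁ hδ₁
    obtain ⟨hδ₁δ, hlim, η₁, hLev, hnot, hres⟩ := hδ₁
    by_contra hδ₁S
    exact hnot (pstar_limit_mem θ succl rst Λst qst δ η S hS' δ₁ hδ₁δ hlim hδ₁S η₁ hLev hres)
  exact ⟨hsub, tenuous_mono hsub hten⟩

end RRF
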